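/- Let F be a field and p_F, p_G, q, r_F, r_G ∈ F[λ] with p_F·p_G ≠ 0 and r_F·r_G ≠ 0, and suppose p_F·r_F is coprime to p_G·r_G. Set m = Ω(p_F) and n = Ω(r_F). Then for all natural numbers α, β with α + β = m + n and min(m,n) ≤ α, β ≤ max(m,n), there exist polynomials p̃_F, r̃_F, q̃ ∈ F[λ] such that p̃_F·r̃_F is a nonzero scalar multiple of p_F·r_F, Ω(p̃_F) = α, Ω(r̃_F) = β, and the 2×2 upper triangular matrix polynomial [[p̃_F·p_G, q̃],[0, r̃_F·r_G]] is unimodularly equivalent to [[p_F·p_G, q],[0, r_F·r_G]]. -/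

import Mathlib

open Polynomial

/-- Unimodular equivalence of square matrix polynomials. -/
def UnimodEquiv {F : Type*} [Field F] {n : ℕ}
    (P Q : Matrix (Fin n) (Fin n) F[X]) : Prop :=
  ∃ U V : Matrix (Fin n) (Fin n) F[X], IsUnit U.det ∧ IsUnit V.det ∧ Q = U * P * V

/-- `Ω(p)`: the number of irreducible factors of `p` counted with multiplicity,
i.e. the cardinality of the multiset of normalized irreducible factors of `p`. -/
noncomputable def OmegaCount {F : Type*} [Field F] (p : F[X]) : ℕ :=
  letI := Classical.decEq F
  (UniqueFactorizationMonoid.normalizedFactors p).card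

open UniqueFactorizationMonoid

section Aux

variable {F : Type*} [Field F]

lemma unimodEquiv_symm {k : ℕ} {P Q : Matrix (Fin k) (Fin k) F[X]}
    (h : UnimodEquiv P Q) : UnimodEquiv Q P := by
  obtain ⟨U, V, hU, hV, hQ⟩ := h
  refine ⟨U⁻¹, V⁻¹, ?_, ?_, ?_⟩
  · rw [Matrix.det_nonsing_inv]
    exact isUnit_ringInverse.mpr hU
  · rw [Matrix.det_nonsing_inv]
    exact isUnit_ringInverse.mpr hV
  · rw [hQ]
    rw [Matrix.mul_assoc, Matrix.mul_assoc, Matrix.mul_nonsing_inv _ hV, Matrix.mul_one,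
      ← Matrix.mul_assoc, Matrix.nonsing_inv_mul _ hU, Matrix.one_mul]

lemma unimodEquiv_trans {k : ℕ} {P Q R : Matrix (Fin k) (Fin k) F[X]}
    (h1 : UnimodEquiv P Q) (h2 : UnimodEquiv Q R) : UnimodEquiv P R := by
  obtain ⟨U, V, hU, hV, hQ⟩ := h1
  obtain ⟨U', V', hU', hV', hR⟩ := h2
  refine ⟨U' * U, V * V', ?_, ?_, ?_⟩
  · rw [Matrix.det_mul]; exact hU'.mul hU
  · rw [Matrix.det_mul]; exact hV.mul hV'
  · rw [hR, hQ]; noncomm_ring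

lemma unimodEquiv_smul {k : ℕ} (g : F[X]) {P Q : Matrix (Fin k) (Fin k) F[X]}
    (h : UnimodEquiv P Q) : UnimodEquiv (g • P) (g • Q) := by
  obtain ⟨U, V, hU, hV, hQ⟩ := h
  exact ⟨U, V, hU, hV, by rw [Matrix.mul_smul, Matrix.smul_mul, hQ]⟩

lemma smul_fin2 (g a b c d : F[X]) :
    g • !![a, b; c, d] = !![g*a, g*b; g*c, g*d] := by
  ext i j
  fin_cases i <;> fin_cases j <;> simp

/-- There is a shift of `q` by a multiple of `b` that is coprime to `a`. -/
lemma exists_coprime_shift (a q b : F[X]) (ha : a ≠ 0)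
    (hbez : ∃ x y z, x*a + y*q + z*b = 1) :
    ∃ s : F[X], IsCoprime a (q + s*b) := by
  classical
  obtain ⟨x, y, z, hxyz⟩ := hbez
  refine ⟨∏ p ∈ (normalizedFactors a).toFinset.filter (fun p => ¬ p ∣ q), p, ?_⟩
  set s : F[X] := ∏ p ∈ (normalizedFactors a).toFinset.filter (fun p => ¬ p ∣ q), p with hs
  by_contra hnc
  have hgu : ¬ IsUnit (EuclideanDomain.gcd a (q + s*b)) := by
    rw [EuclideanDomain.gcd_isUnit_iff]; exact hnc
  have hg0 : EuclideanDomain.gcd a (q + s*b) ≠ 0 := by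
    intro h0
    exact ha (EuclideanDomain.gcd_eq_zero_iff.mp h0).1
  obtain ⟨π, hπirr, hπg⟩ := WfDvdMonoid.exists_irreducible_factor hgu hg0
  have hπa : π ∣ a := hπg.trans (EuclideanDomain.gcd_dvd_left _ _)
  have hπq' : π ∣ q + s*b := hπg.trans (EuclideanDomain.gcd_dvd_right _ _)
  have hπprime : Prime π := hπirr.prime
  by_cases hq : π ∣ q
  · have hπsb : π ∣ s*b := (dvd_add_right hq).mp hπq'
    rcases hπprime.dvd_mul.mp hπsb with hπs | hπb
    · obtain ⟨τ, hτmem, hπτ⟩ := hπprime.exists_mem_finset_dvd hπs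
      rw [Finset.mem_filter] at hτmem
      have hτirr : Irreducible τ :=
        irreducible_of_normalized_factor τ (Multiset.mem_toFinset.mp hτmem.1)
      have hassoc : Associated π τ := hπirr.associated_of_dvd hτirr hπτ
      exact hτmem.2 (hassoc.dvd_iff_dvd_left.mp hq)
    · have : π ∣ (1 : F[X]) := by
        rw [← hxyz]
        exact dvd_add (dvd_add (hπa.mul_left x) (hq.mul_left y)) (hπb.mul_left z)
      exact hπirr.not_isUnit (isUnit_of_dvd_one this)
  · obtain ⟨τ, hτmem, hassoc⟩ := exists_mem_normalizedFactors_of_dvd ha hπirr hπa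
    have hτs : τ ∣ s := by
      refine Finset.dvd_prod_of_mem _ ?_
      rw [Finset.mem_filter]
      exact ⟨Multiset.mem_toFinset.mpr hτmem, fun hτq => hq (hassoc.dvd_iff_dvd_left.mpr hτq)⟩
    have hπsb : π ∣ s*b := (hassoc.dvd.trans hτs).mul_right b
    have : π ∣ q := by
      have := dvd_sub hπq' hπsb
      simpa using this
    exact hq this

/-- Core reduction: a triangular matrix with unit content is equivalent to
`diag(1, det)`. -/
lemma reduce_triangular (a q b : F[X]) (ha : a ≠ 0)
    (hbez : ∃ x y z, x*a + y*q + z*b = 1) :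
    UnimodEquiv !![a, q; 0, b] !![1, 0; 0, a*b] := by
  obtain ⟨s, hcop⟩ := exists_coprime_shift a q b ha hbez
  obtain ⟨x0, y0, hxy⟩ := hcop
  refine ⟨!![1, 0; -(y0*b), 1] * !![1, s; 0, 1], !![x0, -(q+s*b); y0, a], ?_, ?_, ?_⟩
  · rw [Matrix.det_mul, Matrix.det_fin_two_of, Matrix.det_fin_two_of]
    norm_num
  · rw [Matrix.det_fin_two_of]
    have : x0 * a - -(q + s * b) * y0 = 1 := by linear_combination hxy
    rw [this]; exact isUnit_one
  · apply Matrix.ext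
    intro i j
    fin_cases i <;> fin_cases j <;>
      simp [Matrix.mul_fin_two] <;>
      first
        | linear_combination hxy
        | linear_combination -hxy
        | linear_combination (a*b) * hxy
        | linear_combination (y0*b) * hxy
        | ring

lemma reduce_triangular' (g a1 q1 b1 : F[X]) (hg : g ≠ 0) (ha1 : a1 ≠ 0)
    (hbez : ∃ x y z, x*a1 + y*q1 + z*b1 = 1) :
    UnimodEquiv !![g*a1, g*q1; 0, g*b1] !![g, 0; 0, g*(a1*b1)] := by
  have h := unimodEquiv_smul g (reduce_triangular a1 q1 b1 ha1 hbez)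
  simp only [smul_fin2, mul_zero, mul_one] at h
  exact h

lemma omegaCount_mul {x y : F[X]} (hx : x ≠ 0) (hy : y ≠ 0) :
    OmegaCount (x * y) = OmegaCount x + OmegaCount y := by
  letI := Classical.decEq F
  show (normalizedFactors (x*y)).card = (normalizedFactors x).card + (normalizedFactors y).card
  rw [normalizedFactors_mul hx hy, Multiset.card_add]

lemma omegaCount_le_of_dvd {x y : F[X]} (hy : y ≠ 0) (h : x ∣ y) :
    OmegaCount x ≤ OmegaCount y := by
  letI := Classical.decEq F
  have hx : x ≠ 0 := ne_zero_of_dvd_ne_zero hy h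
  exact Multiset.card_le_card
    ((dvd_iff_normalizedFactors_le_normalizedFactors hx hy).mp h)

lemma omegaCount_prod_primes (S : Multiset F[X]) (hS : ∀ p ∈ S, Prime p) :
    OmegaCount S.prod = Multiset.card S := by
  letI := Classical.decEq F
  induction S using Multiset.induction_on with
  | empty =>
      show (normalizedFactors (1 : F[X])).card = _
      simp [normalizedFactors_one]
  | cons p s ih =>
      have hp : Prime p := hS p (Multiset.mem_cons_self _ _)
      have hs : ∀ r ∈ s, Prime r := fun r hr => hS r (Multiset.mem_cons_of_mem hr)
      have hs0 : s.prod ≠ 0 := Multiset.prod_ne_zero (fun h0 => (hs 0 h0).ne_zero rfl)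
      rw [Multiset.prod_cons, omegaCount_mul hp.ne_zero hs0, ih hs, Multiset.card_cons]
      have : OmegaCount p = 1 := by
        show (normalizedFactors p).card = 1
        rw [normalizedFactors_irreducible hp.irreducible]
        simp
      omega

lemma exists_divisor_omega (h0 : F[X]) (h0ne : h0 ≠ 0) (t : ℕ)
    (ht : t ≤ OmegaCount h0) :
    ∃ d e : F[X], h0 = d * e ∧ OmegaCount d = t := by
  letI := Classical.decEq F
  set L : List F[X] := (normalizedFactors h0).toList with hL
  set S : Multiset F[X] := ((L.take t : List F[X]) : Multiset F[X]) with hSdef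
  have hSle : S ≤ normalizedFactors h0 := by
    rw [hSdef, ← Multiset.coe_toList (normalizedFactors h0)]
    exact Multiset.coe_le.mpr (L.take_sublist t).subperm
  have hprimes : ∀ p ∈ S, Prime p := by
    intro p hp
    have : p ∈ normalizedFactors h0 := Multiset.mem_of_le hSle hp
    exact prime_of_normalized_factor p this
  have hcard : Multiset.card S = t := by
    rw [hSdef]
    simp only [Multiset.coe_card, List.length_take]
    have : L.length = Multiset.card (normalizedFactors h0) := by
      rw [hL]; exact Multiset.length_toList _
    have ht' : t ≤ L.length := by
      rw [this]; exact ht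
    omega
  have hdvd : S.prod ∣ h0 := by
    have h1 : S.prod ∣ (normalizedFactors h0).prod := Multiset.prod_dvd_prod_of_le hSle
    exact h1.trans (prod_normalizedFactors h0ne).dvd
  obtain ⟨e, he⟩ := hdvd
  exact ⟨S.prod, e, he, by rw [omegaCount_prod_primes S hprimes, hcard]⟩

end Aux

theorem statement_6 {F : Type*} [Field F] (pF pG q rF rG : F[X])
    (hp : pF * pG ≠ 0) (hr : rF * rG ≠ 0)
    (hcop : IsCoprime (pF * rF) (pG * rG))
    (m n : ℕ) (hm : m = OmegaCount pF) (hn : n = OmegaCount rF) :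
    ∀ α β : ℕ, α + β = m + n →
      min m n ≤ α → α ≤ max m n → min m n ≤ β → β ≤ max m n →
      ∃ pF' rF' q' : F[X],
        (∃ c : F, c ≠ 0 ∧ pF' * rF' = C c * (pF * rF)) ∧
        OmegaCount pF' = α ∧ OmegaCount rF' = β ∧
        UnimodEquiv (!![pF' * pG, q'; 0, rF' * rG]) (!![pF * pG, q; 0, rF * rG]) := by
  classical
  intro α β hab hminα hmaxα hminβ hmaxβ
  have hpF : pF ≠ 0 := left_ne_zero_of_mul hp
  have hpG : pG ≠ 0 := right_ne_zero_of_mul hp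
  have hrF : rF ≠ 0 := left_ne_zero_of_mul hr
  have hrG : rG ≠ 0 := right_ne_zero_of_mul hr
  -- the content of the original matrix
  set g : F[X] := EuclideanDomain.gcd (EuclideanDomain.gcd (pF*pG) q) (rF*rG) with hgdef
  have hga : g ∣ pF * pG :=
    (EuclideanDomain.gcd_dvd_left _ _).trans (EuclideanDomain.gcd_dvd_left _ _)
  have hgq : g ∣ q :=
    (EuclideanDomain.gcd_dvd_left _ _).trans (EuclideanDomain.gcd_dvd_right _ _)
  have hgb : g ∣ rF * rG := EuclideanDomain.gcd_dvd_right _ _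
  have hg0 : g ≠ 0 := ne_zero_of_dvd_ne_zero hp hga
  -- split g into a part dividing pF*rF and a part dividing pG*rG
  have hgab : g ∣ (pF * rF) * (pG * rG) := by
    have : g ∣ (pF * pG) * (rF * rG) := hga.mul_right _
    have heq : (pF * pG) * (rF * rG) = (pF * rF) * (pG * rG) := by ring
    rwa [heq] at this
  obtain ⟨g1, g2, hg1F, hg2G, hg12⟩ := exists_dvd_and_dvd_of_dvd_mul hgab
  have hg1 : g1 ≠ 0 := fun h => hg0 (by rw [hg12, h, zero_mul])
  have hg2 : g2 ≠ 0 := fun h => hg0 (by rw [hg12, h, mul_zero])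
  have hcop1 : IsCoprime g1 (pG * rG) := hcop.of_isCoprime_of_dvd_left hg1F
  have hcop2 : IsCoprime g2 (pF * rF) := hcop.symm.of_isCoprime_of_dvd_left hg2G
  have hg1g : g1 ∣ g := hg12 ▸ dvd_mul_right g1 g2
  have hg2g : g2 ∣ g := hg12 ▸ dvd_mul_left g2 g1
  have hg1pF : g1 ∣ pF :=
    (hcop1.of_isCoprime_of_dvd_right (dvd_mul_right pG rG)).dvd_of_dvd_mul_right
      (hg1g.trans hga)
  have hg1rF : g1 ∣ rF :=
    (hcop1.of_isCoprime_of_dvd_right (dvd_mul_left rG pG)).dvd_of_dvd_mul_right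
      (hg1g.trans hgb)
  have hg2pG : g2 ∣ pG :=
    (hcop2.of_isCoprime_of_dvd_right (dvd_mul_right pF rF)).dvd_of_dvd_mul_left
      (hg2g.trans hga)
  have hg2rG : g2 ∣ rG :=
    (hcop2.of_isCoprime_of_dvd_right (dvd_mul_left rF pF)).dvd_of_dvd_mul_left
      (hg2g.trans hgb)
  -- counting
  set k : ℕ := OmegaCount g1 with hk
  have hkm : k ≤ m := hm ▸ omegaCount_le_of_dvd hpF hg1pF
  have hkn : k ≤ n := hn ▸ omegaCount_le_of_dvd hrF hg1rF
  obtain ⟨h0, hh0⟩ : g1 * g1 ∣ pF * rF := mul_dvd_mul hg1pF hg1rF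
  have hpFrF : pF * rF ≠ 0 := mul_ne_zero hpF hrF
  have hh0ne : h0 ≠ 0 := by
    intro h
    rw [h, mul_zero] at hh0
    exact hpFrF hh0
  have homega_total : OmegaCount (pF * rF) = m + n := by
    rw [omegaCount_mul hpF hrF, hm, hn]
  have homega_h0 : m + n = k + k + OmegaCount h0 := by
    rw [← homega_total, hh0, omegaCount_mul (mul_ne_zero hg1 hg1) hh0ne,
      omegaCount_mul hg1 hg1]
  have hkα : k ≤ α := by omega
  have htle : α - k ≤ OmegaCount h0 := by omega
  obtain ⟨d, e, hde, hdcard⟩ := exists_divisor_omega h0 hh0ne (α - k) htle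
  have hdne : d ≠ 0 := fun h => hh0ne (by rw [hde, h, zero_mul])
  have hene : e ≠ 0 := fun h => hh0ne (by rw [hde, h, mul_zero])
  -- the new polynomials
  refine ⟨g1 * d, g1 * e, g, ⟨1, one_ne_zero, ?_⟩, ?_, ?_, ?_⟩
  · rw [map_one, one_mul, hh0, hde]; ring
  · rw [omegaCount_mul hg1 hdne, ← hk, hdcard]; omega
  · have : OmegaCount h0 = OmegaCount d + OmegaCount e := by
      rw [hde, omegaCount_mul hdne hene]
    rw [omegaCount_mul hg1 hene, ← hk]
    omega
  -- the matrix equivalence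
  · have hprod : (g1 * d) * (g1 * e) = pF * rF := by rw [hh0, hde]; ring
    have hpF'ne : g1 * d ≠ 0 := mul_ne_zero hg1 hdne
    have hrF'ne : g1 * e ≠ 0 := mul_ne_zero hg1 hene
    -- divisibility of the new diagonal entries by g
    have hga' : g ∣ (g1 * d) * pG := by
      rw [hg12]
      calc g1 * g2 ∣ (g1 * d) * g2 := mul_dvd_mul (dvd_mul_right g1 d) dvd_rfl
        _ ∣ (g1 * d) * pG := mul_dvd_mul dvd_rfl hg2pG
    have hgb' : g ∣ (g1 * e) * rG := by
      rw [hg12]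
      calc g1 * g2 ∣ (g1 * e) * g2 := mul_dvd_mul (dvd_mul_right g1 e) dvd_rfl
        _ ∣ (g1 * e) * rG := mul_dvd_mul dvd_rfl hg2rG
    obtain ⟨a1, ha1⟩ := hga
    obtain ⟨q1, hq1⟩ := hgq
    obtain ⟨b1, hb1⟩ := hgb
    obtain ⟨a1', ha1'⟩ := hga'
    obtain ⟨b1', hb1'⟩ := hgb'
    have ha1ne : a1 ≠ 0 := by
      intro h; rw [h, mul_zero] at ha1; exact hp ha1
    have ha1'ne : a1' ≠ 0 := by
      intro h; rw [h, mul_zero] at ha1'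
      exact mul_ne_zero hpF'ne hpG ha1'
    -- Bezout relation for the original matrix
    have hgcd1 : EuclideanDomain.gcd (pF*pG) q
        = (pF*pG) * EuclideanDomain.gcdA (pF*pG) q + q * EuclideanDomain.gcdB (pF*pG) q :=
      EuclideanDomain.gcd_eq_gcd_ab _ _
    have hglin : g = (EuclideanDomain.gcd (pF*pG) q) * EuclideanDomain.gcdA _ (rF*rG)
        + (rF*rG) * EuclideanDomain.gcdB _ (rF*rG) := EuclideanDomain.gcd_eq_gcd_ab _ _
    set A := EuclideanDomain.gcdA (pF*pG) q
    set B := EuclideanDomain.gcdB (pF*pG) q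
    set S := EuclideanDomain.gcdA (EuclideanDomain.gcd (pF*pG) q) (rF*rG)
    set T := EuclideanDomain.gcdB (EuclideanDomain.gcd (pF*pG) q) (rF*rG)
    have hbez : (A*S)*a1 + (B*S)*q1 + T*b1 = 1 := by
      apply mul_left_cancel₀ hg0
      rw [mul_one]
      linear_combination (-(A*S))*ha1 - (B*S)*hq1 - T*hb1 - S*hgcd1 - hglin
    -- equivalences to the common diagonal form
    have h2 : UnimodEquiv !![g*a1, g*q1; 0, g*b1] !![g, 0; 0, g*(a1*b1)] :=
      reduce_triangular' g a1 q1 b1 hg0 ha1ne ⟨A*S, B*S, T, by linear_combination hbez⟩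
    have h1 : UnimodEquiv !![g*a1', g*(1:F[X]); 0, g*b1'] !![g, 0; 0, g*(a1'*b1')] :=
      reduce_triangular' g a1' 1 b1' hg0 ha1'ne ⟨0, 1, 0, by ring⟩
    -- the two diagonal forms coincide
    have habab : ((g1*d)*pG) * ((g1*e)*rG) = (pF*pG) * (rF*rG) := by
      linear_combination (pG*rG) * hprod
    rw [ha1', hb1', ha1, hb1] at habab
    have hdiag : a1' * b1' = a1 * b1 := by
      apply mul_left_cancel₀ (mul_ne_zero hg0 hg0)
      linear_combination habab
    rw [mul_one, ← ha1', ← hb1'] at h1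
    rw [← ha1, ← hq1, ← hb1] at h2
    rw [hdiag] at h1
    exact unimodEquiv_trans h1 (unimodEquiv_symm h2)
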